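/- (Theorem 1, fixed point of T.) There exists a unique bounded measurable function J* : S × A → ℝ satisfying T J* = J*; that is, T has exactly one fixed point among bounded measurable functions. -/
import Mathlib


open MeasureTheory ProbabilityTheory Filter

/-- Sup norm of a function on state-action pairs. -/
noncomputable def supNorm {S A : Type*} (J : S × A → ℝ) : ℝ := ⨆ sa, |J sa|

/-- Policy-evaluation operator `T_π`. -/
noncomputable def Tpol {S A : Type*} [MeasurableSpace S] [MeasurableSpace A]
    (p : ProbabilityTheory.Kernel (S × A) S) (pol : ProbabilityTheory.Kernel S A)
    (R : S → Bool) (h : S × A → ℝ) (J : S × A → ℝ) : S × A → ℝ :=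
  fun sa => if R sa.1 = true then 1
    else (1 - h sa) * ∫ s', (∫ a', J (s', a') ∂(pol s')) ∂(p sa)

/-- Bellman optimality operator `T`. -/
noncomputable def Topt {S A : Type*} [MeasurableSpace S] [MeasurableSpace A]
    [Fintype A] [Nonempty A]
    (p : ProbabilityTheory.Kernel (S × A) S)
    (R : S → Bool) (h : S × A → ℝ) (J : S × A → ℝ) : S × A → ℝ :=
  fun sa => if R sa.1 = true then 1
    else (1 - h sa) * ∫ s', (Finset.univ.sup' Finset.univ_nonempty fun a' => J (s', a')) ∂(p sa)

/-- `sup'` over a finite type is 1-Lipschitz for the sup distance. -/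
lemma sup'_abs_sub_le {A : Type*} [Fintype A] [Nonempty A] (f g : A → ℝ) (C : ℝ)
    (hc : ∀ a, |f a - g a| ≤ C) :
    |Finset.univ.sup' Finset.univ_nonempty f - Finset.univ.sup' Finset.univ_nonempty g| ≤ C := by
  rw [abs_sub_le_iff]
  constructor
  · rw [sub_le_iff_le_add]
    refine Finset.sup'_le _ _ fun a _ => ?_
    have h1 := abs_le.1 (hc a)
    have h2 := Finset.le_sup' g (Finset.mem_univ a)
    linarith [h1.2]
  · rw [sub_le_iff_le_add]
    refine Finset.sup'_le _ _ fun a _ => ?_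
    have h1 := abs_le.1 (hc a)
    have h2 := Finset.le_sup' f (Finset.mem_univ a)
    linarith [h1.1]

lemma abs_sup'_le {A : Type*} [Fintype A] [Nonempty A] (f : A → ℝ) (C : ℝ)
    (hc : ∀ a, |f a| ≤ C) : |Finset.univ.sup' Finset.univ_nonempty f| ≤ C := by
  rw [abs_le]
  obtain ⟨a0⟩ := (inferInstance : Nonempty A)
  constructor
  · exact le_trans (abs_le.1 (hc a0)).1 (Finset.le_sup' _ (Finset.mem_univ a0))
  · exact Finset.sup'_le _ _ fun a _ => (abs_le.1 (hc a)).2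

lemma sup'_meas {S A : Type*} [MeasurableSpace S] [MeasurableSpace A] [Fintype A] [Nonempty A]
    (J : S × A → ℝ) (hJ : Measurable J) :
    Measurable (fun s' : S => Finset.univ.sup' Finset.univ_nonempty fun a' => J (s', a')) := by
  have : (fun s' : S => Finset.univ.sup' Finset.univ_nonempty fun a' => J (s', a'))
      = Finset.univ.sup' Finset.univ_nonempty (fun a' s' => J (s', a')) := by
    ext s'; simp [Finset.sup'_apply]
  rw [this]
  exact Finset.measurable_sup' _ fun a _ => hJ.comp (measurable_id.prodMk measurable_const)

/-- `T` preserves measurability. -/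
lemma Topt_meas {S A : Type*} [MeasurableSpace S] [MeasurableSpace A]
    [Fintype A] [Nonempty A]
    (p : ProbabilityTheory.Kernel (S × A) S) [IsMarkovKernel p]
    (R : S → Bool) (hR : Measurable R) (h : S × A → ℝ) (hh : Measurable h)
    (J : S × A → ℝ) (hJ : Measurable J) : Measurable (Topt p R h J) := by
  have hset : MeasurableSet {sa : S × A | R sa.1 = true} :=
    (hR.comp measurable_fst) (measurableSet_singleton true)
  refine Measurable.ite hset measurable_const ?_
  refine (measurable_const.sub hh).mul ?_
  exact (MeasureTheory.StronglyMeasurable.integral_kernel_prod_right' (κ := p)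
    (((sup'_meas J hJ).comp measurable_snd).stronglyMeasurable)).measurable

theorem stmt_7
    {S A : Type*} [MeasurableSpace S] [MeasurableSpace A]
    [Fintype A] [Nonempty A] [MeasurableSingletonClass A]
    (p : ProbabilityTheory.Kernel (S × A) S) [IsMarkovKernel p]
    (R : S → Bool) (hR : Measurable R)
    (h : S × A → ℝ) (hh : Measurable h) (hh01 : ∀ sa, 0 ≤ h sa ∧ h sa ≤ 1)
    (δ : ℝ) (hδ0 : 0 < δ) (hδ1 : δ ≤ 1) (hhaz : ∀ sa, R sa.1 = false → δ ≤ h sa) :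
    ∃! Jstar : S × A → ℝ,
      (Measurable Jstar ∧ (∃ C, ∀ sa, |Jstar sa| ≤ C)) ∧ Topt p R h Jstar = Jstar := by
  classical
  letI : TopologicalSpace (S × A) := ⊥
  haveI : DiscreteTopology (S × A) := ⟨rfl⟩
  -- boundedness of T J
  have hTbound : ∀ (J : S × A → ℝ) (C : ℝ), 0 ≤ C → (∀ sa, |J sa| ≤ C) →
      ∀ sa, |Topt p R h J sa| ≤ max 1 C := by
    intro J C hC0 hJC sa
    unfold Topt
    by_cases hr : R sa.1 = true
    · simp [hr]
    · simp only [hr, if_false]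
      have h0 := (hh01 sa).1
      have h1 := (hh01 sa).2
      have hint : |∫ s', (Finset.univ.sup' Finset.univ_nonempty fun a' => J (s', a')) ∂(p sa)| ≤ C := by
        have := norm_integral_le_of_norm_le_const (μ := p sa)
          (f := fun s' => Finset.univ.sup' Finset.univ_nonempty fun a' => J (s', a')) (C := C)
          (Filter.Eventually.of_forall fun s' =>
            abs_sup'_le _ C fun a' => hJC (s', a'))
        simpa [Real.norm_eq_abs] using this
      calc |(1 - h sa) * ∫ s', (Finset.univ.sup' Finset.univ_nonempty fun a' => J (s', a')) ∂(p sa)|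
          = |1 - h sa| * |∫ s', (Finset.univ.sup' Finset.univ_nonempty fun a' => J (s', a')) ∂(p sa)| := abs_mul _ _
        _ ≤ 1 * C := by
            apply mul_le_mul _ hint (abs_nonneg _) zero_le_one
            rw [abs_le]; constructor <;> linarith
        _ = C := one_mul C
        _ ≤ max 1 C := le_max_right _ _
  -- the space of bounded measurable functions
  set X : Set (BoundedContinuousFunction (S × A) ℝ) := {J | Measurable (⇑J)} with hX
  have hXclosed : IsClosed X := by
    refine IsSeqClosed.isClosed ?_
    intro f g hf hfg
    refine measurable_of_tendsto_metrizable (fun n => hf n) (tendsto_pi_nhds.2 fun x => ?_)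
    rw [tendsto_iff_dist_tendsto_zero]
    refine squeeze_zero (fun n => dist_nonneg)
      (fun n => BoundedContinuousFunction.dist_coe_le_dist x) ?_
    exact tendsto_iff_dist_tendsto_zero.1 hfg
  haveI : CompleteSpace X := hXclosed.completeSpace_coe
  haveI : Nonempty X := ⟨⟨0, by
    show Measurable (⇑(0 : BoundedContinuousFunction (S × A) ℝ))
    rw [BoundedContinuousFunction.coe_zero]
    exact measurable_zero⟩⟩
  -- the operator F on X
  have hmapsto : ∀ J : X, Measurable (Topt p R h (⇑(J : BoundedContinuousFunction (S × A) ℝ))) :=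
    fun J => Topt_meas p R hR h hh _ J.2
  set F : X → X := fun J =>
    ⟨BoundedContinuousFunction.ofNormedAddCommGroupDiscrete
      (Topt p R h (⇑(J : BoundedContinuousFunction (S × A) ℝ))) (max 1 ‖(J : BoundedContinuousFunction (S × A) ℝ)‖)
      (fun sa => by
        simpa [Real.norm_eq_abs] using
          hTbound (⇑(J : BoundedContinuousFunction (S × A) ℝ)) ‖(J : BoundedContinuousFunction (S × A) ℝ)‖ (norm_nonneg _)
            (fun sa => by
              simpa [Real.norm_eq_abs] using
                BoundedContinuousFunction.norm_coe_le_norm (J : BoundedContinuousFunction (S × A) ℝ) sa) sa),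
      hmapsto J⟩ with hF
  have hFcoe : ∀ J : X, ⇑((F J : BoundedContinuousFunction (S × A) ℝ)) = Topt p R h (⇑(J : BoundedContinuousFunction (S × A) ℝ)) :=
    fun J => rfl
  -- contraction
  set γ : NNReal := ⟨1 - δ, by linarith⟩ with hγ
  have hγcoe : (γ : ℝ) = 1 - δ := rfl
  have hγ1 : γ < 1 := by
    rw [← NNReal.coe_lt_coe, hγcoe]; norm_num; exact hδ0
  have hcontr : ContractingWith γ F := by
    refine ⟨hγ1, LipschitzWith.of_dist_le_mul fun J1 J2 => ?_⟩
    rw [Subtype.dist_eq, Subtype.dist_eq]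
    set D := dist (J1 : BoundedContinuousFunction (S × A) ℝ) (J2 : BoundedContinuousFunction (S × A) ℝ) with hD
    have hD0 : 0 ≤ D := dist_nonneg
    refine BoundedContinuousFunction.dist_le (mul_nonneg (NNReal.coe_nonneg γ) hD0) |>.2 fun sa => ?_
    rw [hFcoe, hFcoe, Real.dist_eq]
    unfold Topt
    by_cases hr : R sa.1 = true
    · simp only [hr, if_true, sub_self, abs_zero]
      exact mul_nonneg (NNReal.coe_nonneg γ) hD0
    · simp only [hr, if_false]
      have h0 := (hh01 sa).1
      have h1 := (hh01 sa).2
      have hhd := hhaz sa (by simpa using hr)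
      set g1 : S → ℝ := fun s' => Finset.univ.sup' Finset.univ_nonempty
        fun a' => (J1 : BoundedContinuousFunction (S × A) ℝ) (s', a') with hg1
      set g2 : S → ℝ := fun s' => Finset.univ.sup' Finset.univ_nonempty
        fun a' => (J2 : BoundedContinuousFunction (S × A) ℝ) (s', a') with hg2
      have hint1 : Integrable g1 (p sa) := by
        refine Integrable.mono' (integrable_const ‖(J1 : BoundedContinuousFunction (S × A) ℝ)‖)
          ((sup'_meas _ J1.2).aestronglyMeasurable) ?_
        refine Filter.Eventually.of_forall fun s' => ?_
        show ‖g1 s'‖ ≤ _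
        rw [Real.norm_eq_abs]
        exact abs_sup'_le _ _ fun a' => by
          simpa [Real.norm_eq_abs] using
            BoundedContinuousFunction.norm_coe_le_norm (J1 : BoundedContinuousFunction (S × A) ℝ) (s', a')
      have hint2 : Integrable g2 (p sa) := by
        refine Integrable.mono' (integrable_const ‖(J2 : BoundedContinuousFunction (S × A) ℝ)‖)
          ((sup'_meas _ J2.2).aestronglyMeasurable) ?_
        refine Filter.Eventually.of_forall fun s' => ?_
        show ‖g2 s'‖ ≤ _
        rw [Real.norm_eq_abs]
        exact abs_sup'_le _ _ fun a' => by
          simpa [Real.norm_eq_abs] using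
            BoundedContinuousFunction.norm_coe_le_norm (J2 : BoundedContinuousFunction (S × A) ℝ) (s', a')
      have hdiff : |(∫ s', g1 s' ∂(p sa)) - ∫ s', g2 s' ∂(p sa)| ≤ D := by
        rw [← integral_sub hint1 hint2]
        have := norm_integral_le_of_norm_le_const (μ := p sa)
          (f := fun s' => g1 s' - g2 s') (C := D)
          (Filter.Eventually.of_forall fun s' => by
            rw [Real.norm_eq_abs]
            exact sup'_abs_sub_le _ _ D fun a' => by
              rw [← Real.dist_eq]
              exact BoundedContinuousFunction.dist_coe_le_dist (s', a'))
        simpa [Real.norm_eq_abs] using this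
      calc |(1 - h sa) * (∫ s', g1 s' ∂(p sa)) - (1 - h sa) * ∫ s', g2 s' ∂(p sa)|
          = (1 - h sa) * |(∫ s', g1 s' ∂(p sa)) - ∫ s', g2 s' ∂(p sa)| := by
            rw [← mul_sub, abs_mul, abs_of_nonneg (by linarith : (0:ℝ) ≤ 1 - h sa)]
        _ ≤ (1 - δ) * D := by
            apply mul_le_mul (by linarith) hdiff (abs_nonneg _) (by linarith)
        _ = (γ : ℝ) * D := by rw [hγcoe]
  -- the fixed point
  set Jfix : X := ContractingWith.fixedPoint F hcontr with hJfix
  have hfixed : F Jfix = Jfix := hcontr.fixedPoint_isFixedPt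
  refine ⟨⇑(Jfix : BoundedContinuousFunction (S × A) ℝ), ⟨⟨Jfix.2, ⟨‖(Jfix : BoundedContinuousFunction (S × A) ℝ)‖, fun sa => by
    simpa [Real.norm_eq_abs] using
      BoundedContinuousFunction.norm_coe_le_norm (Jfix : BoundedContinuousFunction (S × A) ℝ) sa⟩⟩, ?_⟩, ?_⟩
  · have := congrArg (fun J : X => ⇑(J : BoundedContinuousFunction (S × A) ℝ)) hfixed
    simpa [hFcoe] using this
  · rintro J' ⟨⟨hJ'meas, ⟨C, hC⟩⟩, hJ'fix⟩
    set J'b : BoundedContinuousFunction (S × A) ℝ := BoundedContinuousFunction.ofNormedAddCommGroupDiscrete J' C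
      (fun sa => by simpa [Real.norm_eq_abs] using hC sa) with hJ'b
    have hmem : J'b ∈ X := hJ'meas
    have hfix' : Function.IsFixedPt F ⟨J'b, hmem⟩ := by
      apply Subtype.ext
      apply BoundedContinuousFunction.ext
      intro sa
      show Topt p R h (⇑J'b) sa = J'b sa
      show Topt p R h J' sa = J' sa
      rw [hJ'fix]
    have := hcontr.fixedPoint_unique hfix'
    exact congrArg (fun J : X => ⇑(J : BoundedContinuousFunction (S × A) ℝ)) this
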